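/- (Locality of the conditional dual value function) Let $\tau$ be a stopping time, $V$ a convex decreasing function on $(0,\infty)$, $Z$ a positive random variable, and $\mathcal{Y}$ a nonempty family of positive random variables. Define $v(\eta) = \operatorname{essinf}_{Y \in \mathcal{Y}} E[V(Z \eta Y) \mid \mathcal{F}_\tau]$ for $\eta \in L^0_{++}(\mathcal{F}_\tau)$. Then for any $A \in \mathcal{F}_\tau$ and $\eta_1, \eta_2 \in L^0_{++}(\mathcal{F}_\tau)$: $v(1_A \eta_1 + 1_{A^c}\eta_2) = 1_A v(\eta_1) + 1_{A^c} v(\eta_2)$ almost surely, provided all the conditional expectations involved are a.s. finite. -/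

import Mathlib

open MeasureTheory Filter Set
open scoped ENNReal Topology

/-- The σ-algebra `ℱ_τ` of a stopping time with its December-2024 Mathlib meaning:
`{s | ∀ i, s ∩ {τ ≤ i} ∈ ℱ i}` (without the newer extra condition `s ∈ ⨆ i, ℱ i`). -/
def MeasureTheory.IsStoppingTime.measurableSpaceOld {Ω ι : Type*} [Preorder ι]
    {m : MeasurableSpace Ω} {f : Filtration ι m} {τ : Ω → WithTop ι}
    (hτ : IsStoppingTime f τ) : MeasurableSpace Ω where
  MeasurableSet' s := ∀ i : ι, MeasurableSet[f i] (s ∩ {ω | τ ω ≤ i})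
  measurableSet_empty i := by
    rw [Set.empty_inter]
    exact @MeasurableSet.empty _ (f i)
  measurableSet_compl s hs i := by
    rw [(_ : sᶜ ∩ {ω | τ ω ≤ i} = (sᶜ ∪ {ω | τ ω ≤ i}ᶜ) ∩ {ω | τ ω ≤ i})]
    · refine MeasurableSet.inter ?_ ?_
      · rw [← Set.compl_inter]
        exact (hs i).compl
      · exact hτ i
    · rw [Set.union_inter_distrib_right]
      simp only [Set.compl_inter_self, Set.union_empty]
  measurableSet_iUnion s hs i := by
    rw [Set.iUnion_inter]
    exact @MeasurableSet.iUnion _ _ (f i) _ _ (fun j => hs j i)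

section Stmt17AuxSec
open Real

namespace Stmt17Aux

variable {Ω : Type*} {mΩ : MeasurableSpace Ω}

lemma int_bdd (P : Measure Ω) [IsProbabilityMeasure P] {f : Ω → ℝ} (hf : Measurable f)
    {C : ℝ} (hC : ∀ ω, |f ω| ≤ C) : Integrable f P := by
  refine (integrable_const C).mono hf.aestronglyMeasurable ?_
  exact Eventually.of_forall fun ω => by
    rw [Real.norm_eq_abs, Real.norm_eq_abs]; exact (hC ω).trans (le_abs_self C)

lemma abs_arctan_le (x : ℝ) : |Real.arctan x| ≤ π / 2 :=
  abs_le.2 ⟨(Real.neg_pi_div_two_lt_arctan x).le, (Real.arctan_lt_pi_div_two x).le⟩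

lemma exists_meas_version (P : Measure Ω) [IsProbabilityMeasure P]
    {m : MeasurableSpace Ω} (hm : m ≤ mΩ)
    (𝒢 : Set (Ω → ℝ)) (h𝒢ne : 𝒢.Nonempty)
    (h𝒢meas : ∀ f ∈ 𝒢, Measurable[m] f)
    (h𝒢dir : ∀ f ∈ 𝒢, ∀ g ∈ 𝒢, ∃ h ∈ 𝒢, h ≤ᵐ[P] f ∧ h ≤ᵐ[P] g)
    (v : Ω → ℝ) (hv : ∀ f ∈ 𝒢, v ≤ᵐ[P] f) :
    ∃ w : Ω → ℝ, Measurable[m] w ∧ (∀ f ∈ 𝒢, w ≤ᵐ[P] f) ∧ v ≤ᵐ[P] w := by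
  classical
  have hmm : ∀ f ∈ 𝒢, Measurable[mΩ] f := fun f hf => (h𝒢meas f hf).mono hm le_rfl
  have hintar : ∀ f ∈ 𝒢, Integrable (fun ω => Real.arctan (f ω)) P := fun f hf =>
    int_bdd P (hmm f hf).arctan (fun ω => abs_arctan_le _)
  set c : (Ω → ℝ) → ℝ := fun f => ∫ ω, Real.arctan (f ω) ∂P with hc
  set S := c '' 𝒢 with hS
  have hSne : S.Nonempty := h𝒢ne.image c
  have hSbdd : BddBelow S := by
    refine ⟨-(π/2), ?_⟩
    rintro x ⟨f, hf, rfl⟩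
    calc -(π/2) = ∫ _ω, -(π/2) ∂P := by simp
    _ ≤ c f := integral_mono_ae (integrable_const _) (hintar f hf)
        (Eventually.of_forall fun ω => (Real.neg_pi_div_two_lt_arctan _).le)
  set s := sInf S with hs
  have hsle : ∀ f ∈ 𝒢, s ≤ c f := fun f hf => csInf_le hSbdd ⟨f, hf, rfl⟩
  have hYex : ∀ n : ℕ, ∃ f, f ∈ 𝒢 ∧ c f < s + 1/((n:ℝ)+1) := by
    intro n
    obtain ⟨x, hxS, hx⟩ := Real.lt_sInf_add_pos hSne (show (0:ℝ) < 1/((n:ℝ)+1) by positivity)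
    obtain ⟨f, hf, rfl⟩ := hxS
    exact ⟨f, hf, hx⟩
  choose Y hYmem hYc using hYex
  let pick : (Ω → ℝ) → (Ω → ℝ) → (Ω → ℝ) := fun f g =>
    if h : f ∈ 𝒢 ∧ g ∈ 𝒢 then (h𝒢dir f h.1 g h.2).choose else f
  have hpickspec : ∀ f, f ∈ 𝒢 → ∀ g, g ∈ 𝒢 →
      pick f g ∈ 𝒢 ∧ pick f g ≤ᵐ[P] f ∧ pick f g ≤ᵐ[P] g := by
    intro f hf g hg
    simp only [pick, dif_pos (And.intro hf hg)]
    exact (h𝒢dir f hf g hg).choose_spec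
  let T : ℕ → Ω → ℝ := fun n => Nat.rec (Y 0) (fun k t => pick t (Y (k+1))) n
  have hTmem : ∀ n, T n ∈ 𝒢 := by
    intro n
    induction n with
    | zero => exact hYmem 0
    | succ k ih => exact (hpickspec _ ih _ (hYmem (k+1))).1
  have hTdec : ∀ n, T (n+1) ≤ᵐ[P] T n := fun n =>
    (hpickspec _ (hTmem n) _ (hYmem (n+1))).2.1
  have hTY : ∀ n, T n ≤ᵐ[P] Y n := by
    intro n
    cases n with
    | zero => exact EventuallyLE.refl _ _
    | succ k => exact (hpickspec _ (hTmem k) _ (hYmem (k+1))).2.2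
  have hTmeas : ∀ n, Measurable[m] (T n) := fun n => h𝒢meas _ (hTmem n)
  set L : Ω → ℝ := fun ω => ⨅ n, Real.arctan (T n ω) with hL
  have hbdd : ∀ ω, BddBelow (Set.range fun n => Real.arctan (T n ω)) := by
    intro ω
    refine ⟨-(π/2), ?_⟩
    rintro x ⟨n, rfl⟩
    exact (Real.neg_pi_div_two_lt_arctan _).le
  have hLle : ∀ n ω, L ω ≤ Real.arctan (T n ω) := fun n ω => ciInf_le (hbdd ω) n
  have hLge : ∀ ω, -(π/2) ≤ L ω := fun ω =>
    le_ciInf fun n => (Real.neg_pi_div_two_lt_arctan _).le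
  have hLlt : ∀ ω, L ω < π/2 := fun ω => (hLle 0 ω).trans_lt (Real.arctan_lt_pi_div_two _)
  have hLmeas : Measurable[m] L :=
    Measurable.iInf (fun n => (hTmeas n).arctan)
  have hLabs : ∀ ω, |L ω| ≤ π/2 := fun ω => abs_le.2 ⟨hLge ω, (hLlt ω).le⟩
  have hLmeas' : Measurable[mΩ] L := hLmeas.mono hm le_rfl
  have hLint : Integrable L P := int_bdd P hLmeas' hLabs
  have hmono : ∀ᵐ ω ∂P, ∀ n, T (n+1) ω ≤ T n ω := ae_all_iff.2 hTdec
  have hlim : ∀ᵐ ω ∂P, Tendsto (fun n => Real.arctan (T n ω)) atTop (𝓝 (L ω)) := by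
    filter_upwards [hmono] with ω hω
    have hanti : Antitone fun n => Real.arctan (T n ω) :=
      antitone_nat_of_succ_le fun n => Real.arctan_strictMono.monotone (hω n)
    exact tendsto_atTop_ciInf hanti (hbdd ω)
  have hcTs : Tendsto (fun n => c (T n)) atTop (𝓝 (∫ ω, L ω ∂P)) :=
    tendsto_integral_of_dominated_convergence (fun _ => π/2)
      (fun n => (hmm _ (hTmem n)).arctan.aestronglyMeasurable)
      (integrable_const _)
      (fun n => Eventually.of_forall fun ω => by
        rw [Real.norm_eq_abs]; exact abs_arctan_le _)
      hlim
  have hsq : Tendsto (fun n => c (T n)) atTop (𝓝 s) := by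
    have h1 : Tendsto (fun n : ℕ => s + 1/((n:ℝ)+1)) atTop (𝓝 (s + 0)) :=
      tendsto_const_nhds.add tendsto_one_div_add_atTop_nhds_zero_nat
    rw [add_zero] at h1
    refine tendsto_of_tendsto_of_tendsto_of_le_of_le tendsto_const_nhds h1
      (fun n => hsle _ (hTmem n)) (fun n => ?_)
    have hcc : c (T n) ≤ c (Y n) :=
      integral_mono_ae (hintar _ (hTmem n)) (hintar _ (hYmem n))
        (by filter_upwards [hTY n] with ω h using Real.arctan_strictMono.monotone h)
    exact hcc.trans (hYc n).le
  have hintL : ∫ ω, L ω ∂P = s := tendsto_nhds_unique hcTs hsq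
  have hkey : ∀ f ∈ 𝒢, ∀ᵐ ω ∂P, L ω ≤ Real.arctan (f ω) := by
    intro f hf
    have hfm : Measurable[mΩ] f := hmm f hf
    set M : Ω → ℝ := fun ω => min (L ω) (Real.arctan (f ω)) with hM
    have hMmeas : Measurable[mΩ] M := hLmeas'.min hfm.arctan
    have hMabs : ∀ ω, |M ω| ≤ π/2 := fun ω => abs_le.2
      ⟨le_min (hLge ω) (Real.neg_pi_div_two_lt_arctan _).le,
       (min_le_left _ _).trans (hLlt ω).le⟩
    have hMint : Integrable M P := int_bdd P hMmeas hMabs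
    have hMnmeas : ∀ n, Measurable[mΩ] fun ω => min (Real.arctan (T n ω)) (Real.arctan (f ω)) :=
      fun n => (hmm _ (hTmem n)).arctan.min hfm.arctan
    have hMnabs : ∀ n ω, |min (Real.arctan (T n ω)) (Real.arctan (f ω))| ≤ π/2 := fun n ω =>
      abs_le.2 ⟨le_min (Real.neg_pi_div_two_lt_arctan _).le
          (Real.neg_pi_div_two_lt_arctan _).le,
        (min_le_left _ _).trans (Real.arctan_lt_pi_div_two _).le⟩
    have htendM : Tendsto (fun n => ∫ ω, min (Real.arctan (T n ω)) (Real.arctan (f ω)) ∂P)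
        atTop (𝓝 (∫ ω, M ω ∂P)) := by
      refine tendsto_integral_of_dominated_convergence (fun _ => π/2)
        (fun n => (hMnmeas n).aestronglyMeasurable) (integrable_const _)
        (fun n => Eventually.of_forall fun ω => ?_) ?_
      · rw [Real.norm_eq_abs]; exact hMnabs n ω
      · filter_upwards [hlim] with ω h
        exact h.min tendsto_const_nhds
    have hsM : s ≤ ∫ ω, M ω ∂P := by
      refine ge_of_tendsto' htendM (fun n => ?_)
      obtain ⟨hUmem, hU1, hU2⟩ := hpickspec (T n) (hTmem n) f hf
      calc s ≤ c (pick (T n) f) := hsle _ hUmem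
      _ ≤ ∫ ω, min (Real.arctan (T n ω)) (Real.arctan (f ω)) ∂P := by
          refine integral_mono_ae (hintar _ hUmem)
            (int_bdd P (hMnmeas n) (hMnabs n)) ?_
          filter_upwards [hU1, hU2] with ω h1 h2
          exact le_min (Real.arctan_strictMono.monotone h1)
            (Real.arctan_strictMono.monotone h2)
    have hML : ∫ ω, M ω ∂P ≤ s := by
      rw [← hintL]
      exact integral_mono_ae hMint hLint (Eventually.of_forall fun ω => min_le_left _ _)
    have h0 : ∫ ω, (L ω - M ω) ∂P = 0 := by
      rw [integral_sub hLint hMint, hintL]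
      linarith
    have hz : (fun ω => L ω - M ω) =ᵐ[P] 0 :=
      (integral_eq_zero_iff_of_nonneg_ae
        (Eventually.of_forall fun ω => sub_nonneg.2 (min_le_left _ _))
        (hLint.sub hMint)).1 h0
    filter_upwards [hz] with ω hω
    have h1 : L ω = M ω := by
      have h2 : L ω - M ω = 0 := hω
      linarith
    exact h1.le.trans (min_le_right _ _)
  have hvT : ∀ᵐ ω ∂P, ∀ n, v ω ≤ T n ω := ae_all_iff.2 fun n => hv _ (hTmem n)
  have hIoo : ∀ᵐ ω ∂P, Real.arctan (v ω) ≤ L ω := by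
    filter_upwards [hvT] with ω hω
    exact le_ciInf fun n => Real.arctan_strictMono.monotone (hω n)
  refine ⟨fun ω => Real.tan (L ω), ?_, ?_, ?_⟩
  · have heq : (fun ω => Real.tan (L ω)) = fun ω => Real.sin (L ω) / Real.cos (L ω) :=
      funext fun ω => Real.tan_eq_sin_div_cos _
    rw [heq]
    exact hLmeas.sin.div hLmeas.cos
  · intro f hf
    filter_upwards [hkey f hf, hIoo] with ω h1 h2
    have hLmem : L ω ∈ Set.Ioo (-(π/2)) (π/2) :=
      ⟨(Real.neg_pi_div_two_lt_arctan (v ω)).trans_le h2, hLlt ω⟩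
    have h3 := Real.strictMonoOn_tan.monotoneOn hLmem (Real.arctan_mem_Ioo (f ω)) h1
    rwa [Real.tan_arctan] at h3
  · filter_upwards [hIoo] with ω h2
    have hLmem : L ω ∈ Set.Ioo (-(π/2)) (π/2) :=
      ⟨(Real.neg_pi_div_two_lt_arctan (v ω)).trans_le h2, hLlt ω⟩
    have h3 := Real.strictMonoOn_tan.monotoneOn (Real.arctan_mem_Ioo (v ω)) hLmem h2
    rwa [Real.tan_arctan] at h3

lemma condExp_split {Ω : Type*} {m mΩ : MeasurableSpace Ω} (hm : m ≤ mΩ)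
    (P : Measure Ω) [IsProbabilityMeasure P]
    {B : Set Ω} (hB : MeasurableSet[m] B) {f₁ f₂ : Ω → ℝ}
    (h₁ : Integrable f₁ P) (h₂ : Integrable f₂ P) :
    condExp m P (fun ω => B.indicator f₁ ω + Bᶜ.indicator f₂ ω) =ᵐ[P]
      fun ω => B.indicator (condExp m P f₁) ω + Bᶜ.indicator (condExp m P f₂) ω := by
  have hBm : MeasurableSet[mΩ] B := hm _ hB
  have hBcm : MeasurableSet[mΩ] Bᶜ := hm _ hB.compl
  have hi₁ : Integrable (B.indicator f₁) P := h₁.indicator hBm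
  have hi₂ : Integrable (Bᶜ.indicator f₂) P := h₂.indicator hBcm
  have he : (fun ω => B.indicator f₁ ω + Bᶜ.indicator f₂ ω)
      = B.indicator f₁ + Bᶜ.indicator f₂ := rfl
  rw [he]
  refine (condExp_add hi₁ hi₂ m).trans ?_
  have e1 := condExp_indicator (m := m) (μ := P) h₁ hB
  have e2 := condExp_indicator (m := m) (μ := P) h₂ hB.compl
  filter_upwards [e1, e2] with ω k1 k2
  simp only [Pi.add_apply]
  rw [k1, k2]

lemma dir_aux {Ω : Type*} {m mΩ : MeasurableSpace Ω} (hm : m ≤ mΩ)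
    (P : Measure Ω) [IsProbabilityMeasure P]
    (𝒴 : Set (Ω → ℝ))
    (h𝒴conv : ∀ Y₁ ∈ 𝒴, ∀ Y₂ ∈ 𝒴, ∀ g : Ω → ℝ, Measurable[m] g →
      (∀ ω, 0 ≤ g ω ∧ g ω ≤ 1) → (fun ω => g ω * Y₁ ω + (1 - g ω) * Y₂ ω) ∈ 𝒴)
    (G : Ω → ℝ → ℝ) (hGint : ∀ Y ∈ 𝒴, Integrable (fun ω => G ω (Y ω)) P)
    {Y₁ Y₂ : Ω → ℝ} (hY₁ : Y₁ ∈ 𝒴) (hY₂ : Y₂ ∈ 𝒴) :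
    ∃ Y ∈ 𝒴,
      condExp m P (fun ω => G ω (Y ω)) ≤ᵐ[P] condExp m P (fun ω => G ω (Y₁ ω)) ∧
      condExp m P (fun ω => G ω (Y ω)) ≤ᵐ[P] condExp m P (fun ω => G ω (Y₂ ω)) := by
  classical
  set E₁ := condExp m P (fun ω => G ω (Y₁ ω)) with hE₁
  set E₂ := condExp m P (fun ω => G ω (Y₂ ω)) with hE₂
  set B : Set Ω := {ω | E₁ ω ≤ E₂ ω} with hBdef
  have hB : MeasurableSet[m] B :=
    measurableSet_le stronglyMeasurable_condExp.measurable
      stronglyMeasurable_condExp.measurable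
  set g : Ω → ℝ := B.indicator (fun _ => 1) with hg
  have hgmeas : Measurable[m] g := measurable_const.indicator hB
  have hg01 : ∀ ω, 0 ≤ g ω ∧ g ω ≤ 1 := by
    intro ω
    by_cases h : ω ∈ B <;> simp [hg, Set.indicator_of_mem, Set.indicator_of_notMem, h]
  have hmem := h𝒴conv Y₁ hY₁ Y₂ hY₂ g hgmeas hg01
  have hpt : (fun ω => G ω (g ω * Y₁ ω + (1 - g ω) * Y₂ ω))
      = fun ω => B.indicator (fun ω' => G ω' (Y₁ ω')) ω
        + Bᶜ.indicator (fun ω' => G ω' (Y₂ ω')) ω := by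
    funext ω
    by_cases h : ω ∈ B
    · have hgω : g ω = 1 := Set.indicator_of_mem h _
      rw [Set.indicator_of_mem h, Set.indicator_of_notMem (by simp [h] : ω ∉ Bᶜ), hgω]
      ring_nf
    · have hgω : g ω = 0 := Set.indicator_of_notMem h _
      rw [Set.indicator_of_notMem h, Set.indicator_of_mem (by simp [h] : ω ∈ Bᶜ), hgω]
      ring_nf
  have hsplit := condExp_split hm P hB (hGint Y₁ hY₁) (hGint Y₂ hY₂)
  refine ⟨_, hmem, ?_, ?_⟩
  · rw [hpt]
    filter_upwards [hsplit] with ω h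
    rw [h]
    by_cases hω : ω ∈ B
    · rw [Set.indicator_of_mem hω, Set.indicator_of_notMem (by simp [hω] : ω ∉ Bᶜ), add_zero]
    · rw [Set.indicator_of_notMem hω, Set.indicator_of_mem (by simp [hω] : ω ∈ Bᶜ), zero_add]
      exact (not_le.1 hω).le
  · rw [hpt]
    filter_upwards [hsplit] with ω h
    rw [h]
    by_cases hω : ω ∈ B
    · rw [Set.indicator_of_mem hω, Set.indicator_of_notMem (by simp [hω] : ω ∉ Bᶜ), add_zero]
      exact hω
    · rw [Set.indicator_of_notMem hω, Set.indicator_of_mem (by simp [hω] : ω ∈ Bᶜ), zero_add]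

end Stmt17Aux

end Stmt17AuxSec


/-- Locality of the conditional dual value function: for a stopping time `τ`, a convex
decreasing `V`, a positive random variable `Z` and an `ℱ_τ`-convex family `𝒴` of positive
random variables, the value function `v(η) = essinf_{Y ∈ 𝒴} E[V(Zηy)|ℱ_τ]` satisfies
`v(1_A η₁ + 1_{Aᶜ} η₂) = 1_A v(η₁) + 1_{Aᶜ} v(η₂)` a.s. for `A ∈ ℱ_τ` and
`η₁, η₂ ∈ L⁰₊₊(ℱ_τ)`.  The essential infima `v₁ = v(η₁)`, `v₂ = v(η₂)` and
`vc = v(1_A η₁ + 1_{Aᶜ} η₂)` are expressed through their characterizing properties. -/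
theorem stmt17 {Ω ι : Type*} [LinearOrder ι] {mΩ : MeasurableSpace Ω}
    (P : Measure Ω) [IsProbabilityMeasure P]
    (ℱ : Filtration ι mΩ) (τ : Ω → ι) (hτ : IsStoppingTime ℱ (fun ω => (τ ω : WithTop ι)))
    (hle : hτ.measurableSpaceOld ≤ mΩ)
    (V : ℝ → ℝ) (hVconv : ConvexOn ℝ (Set.Ioi 0) V) (hVdec : AntitoneOn V (Set.Ioi 0))
    (Z : Ω → ℝ) (hZmeas : Measurable Z) (hZpos : ∀ᵐ ω ∂P, 0 < Z ω)
    (𝒴 : Set (Ω → ℝ)) (h𝒴ne : 𝒴.Nonempty)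
    (h𝒴pos : ∀ Y ∈ 𝒴, Measurable Y ∧ ∀ᵐ ω ∂P, 0 < Y ω)
    (h𝒴conv : ∀ Y₁ ∈ 𝒴, ∀ Y₂ ∈ 𝒴, ∀ g : Ω → ℝ, Measurable[hτ.measurableSpaceOld] g →
      (∀ ω, 0 ≤ g ω ∧ g ω ≤ 1) → (fun ω => g ω * Y₁ ω + (1 - g ω) * Y₂ ω) ∈ 𝒴)
    (η₁ η₂ : Ω → ℝ)
    (hη₁ : Measurable[hτ.measurableSpaceOld] η₁ ∧ ∀ᵐ ω ∂P, 0 < η₁ ω)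
    (hη₂ : Measurable[hτ.measurableSpaceOld] η₂ ∧ ∀ᵐ ω ∂P, 0 < η₂ ω)
    (A : Set Ω) (hA : MeasurableSet[hτ.measurableSpaceOld] A)
    -- all the conditional expectations involved are well-defined (integrability)
    (hint₁ : ∀ Y ∈ 𝒴, Integrable (fun ω => V (Z ω * η₁ ω * Y ω)) P)
    (hint₂ : ∀ Y ∈ 𝒴, Integrable (fun ω => V (Z ω * η₂ ω * Y ω)) P)
    (hintc : ∀ Y ∈ 𝒴, Integrable
      (fun ω => V (Z ω * (A.indicator η₁ ω + Aᶜ.indicator η₂ ω) * Y ω)) P)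
    (v₁ v₂ vc : Ω → ℝ)
    -- v₁ = essinf_{Y ∈ 𝒴} E[V(Zη₁Y)|ℱ_τ]
    (hv₁lb : ∀ Y ∈ 𝒴, ∀ᵐ ω ∂P,
      v₁ ω ≤ condExp hτ.measurableSpaceOld P (fun ω' => V (Z ω' * η₁ ω' * Y ω')) ω)
    (hv₁glb : ∀ w : Ω → ℝ, Measurable[hτ.measurableSpaceOld] w →
      (∀ Y ∈ 𝒴, ∀ᵐ ω ∂P,
        w ω ≤ condExp hτ.measurableSpaceOld P (fun ω' => V (Z ω' * η₁ ω' * Y ω')) ω) →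
      ∀ᵐ ω ∂P, w ω ≤ v₁ ω)
    -- v₂ = essinf_{Y ∈ 𝒴} E[V(Zη₂Y)|ℱ_τ]
    (hv₂lb : ∀ Y ∈ 𝒴, ∀ᵐ ω ∂P,
      v₂ ω ≤ condExp hτ.measurableSpaceOld P (fun ω' => V (Z ω' * η₂ ω' * Y ω')) ω)
    (hv₂glb : ∀ w : Ω → ℝ, Measurable[hτ.measurableSpaceOld] w →
      (∀ Y ∈ 𝒴, ∀ᵐ ω ∂P,
        w ω ≤ condExp hτ.measurableSpaceOld P (fun ω' => V (Z ω' * η₂ ω' * Y ω')) ω) →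
      ∀ᵐ ω ∂P, w ω ≤ v₂ ω)
    -- vc = essinf_{Y ∈ 𝒴} E[V(Z(1_A η₁ + 1_{Aᶜ} η₂)Y)|ℱ_τ]
    (hvclb : ∀ Y ∈ 𝒴, ∀ᵐ ω ∂P,
      vc ω ≤ condExp hτ.measurableSpaceOld P
        (fun ω' => V (Z ω' * (A.indicator η₁ ω' + Aᶜ.indicator η₂ ω') * Y ω')) ω)
    (hvcglb : ∀ w : Ω → ℝ, Measurable[hτ.measurableSpaceOld] w →
      (∀ Y ∈ 𝒴, ∀ᵐ ω ∂P,
        w ω ≤ condExp hτ.measurableSpaceOld P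
          (fun ω' => V (Z ω' * (A.indicator η₁ ω' + Aᶜ.indicator η₂ ω') * Y ω')) ω) →
      ∀ᵐ ω ∂P, w ω ≤ vc ω) :
    vc =ᵐ[P] fun ω => A.indicator v₁ ω + Aᶜ.indicator v₂ ω := by

  classical
  obtain ⟨Y₀, hY₀⟩ := h𝒴ne
  -- measurable a.e.-versions of the three value functions
  obtain ⟨w₁, hw₁meas, hw₁lb', hv₁w₁⟩ :=
    Stmt17Aux.exists_meas_version P hle
      ((fun Y => condExp hτ.measurableSpaceOld P (fun ω' => V (Z ω' * η₁ ω' * Y ω'))) '' 𝒴)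
      (Set.Nonempty.image _ ⟨Y₀, hY₀⟩)
      (by rintro f ⟨Y, hY, rfl⟩; exact stronglyMeasurable_condExp.measurable)
      (by rintro f ⟨Ya, hYa, rfl⟩ g ⟨Yb, hYb, rfl⟩
          obtain ⟨Y, hY, hle1, hle2⟩ := Stmt17Aux.dir_aux hle P 𝒴 h𝒴conv
            (fun ω y => V (Z ω * η₁ ω * y)) (fun Y hY => hint₁ Y hY) hYa hYb
          exact ⟨_, ⟨Y, hY, rfl⟩, hle1, hle2⟩)
      v₁ (by rintro f ⟨Y, hY, rfl⟩; exact hv₁lb Y hY)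
  obtain ⟨w₂, hw₂meas, hw₂lb', hv₂w₂⟩ :=
    Stmt17Aux.exists_meas_version P hle
      ((fun Y => condExp hτ.measurableSpaceOld P (fun ω' => V (Z ω' * η₂ ω' * Y ω'))) '' 𝒴)
      (Set.Nonempty.image _ ⟨Y₀, hY₀⟩)
      (by rintro f ⟨Y, hY, rfl⟩; exact stronglyMeasurable_condExp.measurable)
      (by rintro f ⟨Ya, hYa, rfl⟩ g ⟨Yb, hYb, rfl⟩
          obtain ⟨Y, hY, hle1, hle2⟩ := Stmt17Aux.dir_aux hle P 𝒴 h𝒴conv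
            (fun ω y => V (Z ω * η₂ ω * y)) (fun Y hY => hint₂ Y hY) hYa hYb
          exact ⟨_, ⟨Y, hY, rfl⟩, hle1, hle2⟩)
      v₂ (by rintro f ⟨Y, hY, rfl⟩; exact hv₂lb Y hY)
  obtain ⟨wc, hwcmeas, hwclb', hvcwc⟩ :=
    Stmt17Aux.exists_meas_version P hle
      ((fun Y => condExp hτ.measurableSpaceOld P
        (fun ω' => V (Z ω' * (A.indicator η₁ ω' + Aᶜ.indicator η₂ ω') * Y ω'))) '' 𝒴)
      (Set.Nonempty.image _ ⟨Y₀, hY₀⟩)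
      (by rintro f ⟨Y, hY, rfl⟩; exact stronglyMeasurable_condExp.measurable)
      (by rintro f ⟨Ya, hYa, rfl⟩ g ⟨Yb, hYb, rfl⟩
          obtain ⟨Y, hY, hle1, hle2⟩ := Stmt17Aux.dir_aux hle P 𝒴 h𝒴conv
            (fun ω y => V (Z ω * (A.indicator η₁ ω + Aᶜ.indicator η₂ ω) * y))
            (fun Y hY => hintc Y hY) hYa hYb
          exact ⟨_, ⟨Y, hY, rfl⟩, hle1, hle2⟩)
      vc (by rintro f ⟨Y, hY, rfl⟩; exact hvclb Y hY)
  have hw₁lb : ∀ Y ∈ 𝒴, w₁ ≤ᵐ[P]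
      condExp hτ.measurableSpaceOld P (fun ω' => V (Z ω' * η₁ ω' * Y ω')) :=
    fun Y hY => hw₁lb' _ ⟨Y, hY, rfl⟩
  have hw₂lb : ∀ Y ∈ 𝒴, w₂ ≤ᵐ[P]
      condExp hτ.measurableSpaceOld P (fun ω' => V (Z ω' * η₂ ω' * Y ω')) :=
    fun Y hY => hw₂lb' _ ⟨Y, hY, rfl⟩
  have hwclb : ∀ Y ∈ 𝒴, wc ≤ᵐ[P] condExp hτ.measurableSpaceOld P
      (fun ω' => V (Z ω' * (A.indicator η₁ ω' + Aᶜ.indicator η₂ ω') * Y ω')) :=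
    fun Y hY => hwclb' _ ⟨Y, hY, rfl⟩
  -- splitting of the combined conditional expectations
  have hptc : ∀ Y : Ω → ℝ,
      (fun ω' => V (Z ω' * (A.indicator η₁ ω' + Aᶜ.indicator η₂ ω') * Y ω'))
        = fun ω => A.indicator (fun ω' => V (Z ω' * η₁ ω' * Y ω')) ω
          + Aᶜ.indicator (fun ω' => V (Z ω' * η₂ ω' * Y ω')) ω := by
    intro Y
    funext ω
    by_cases h : ω ∈ A
    · have h' : ω ∉ Aᶜ := by simp [h]
      rw [Set.indicator_of_mem h, Set.indicator_of_mem h,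
        Set.indicator_of_notMem h', Set.indicator_of_notMem h', add_zero, add_zero]
    · have h' : ω ∈ Aᶜ := by simp [h]
      rw [Set.indicator_of_notMem h, Set.indicator_of_notMem h,
        Set.indicator_of_mem h', Set.indicator_of_mem h', zero_add, zero_add]
  have hsplitc : ∀ Y ∈ 𝒴,
      condExp hτ.measurableSpaceOld P
        (fun ω' => V (Z ω' * (A.indicator η₁ ω' + Aᶜ.indicator η₂ ω') * Y ω'))
        =ᵐ[P] fun ω =>
          A.indicator (condExp hτ.measurableSpaceOld P (fun ω' => V (Z ω' * η₁ ω' * Y ω'))) ω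
          + Aᶜ.indicator (condExp hτ.measurableSpaceOld P (fun ω' => V (Z ω' * η₂ ω' * Y ω'))) ω := by
    intro Y hY
    rw [hptc Y]
    exact Stmt17Aux.condExp_split hle P hA (hint₁ Y hY) (hint₂ Y hY)
  -- lower bound : 1_A v₁ + 1_Aᶜ v₂ ≤ vc
  have hlowvc : ∀ᵐ ω ∂P, A.indicator w₁ ω + Aᶜ.indicator w₂ ω ≤ vc ω := by
    refine hvcglb (fun ω => A.indicator w₁ ω + Aᶜ.indicator w₂ ω)
      ((hw₁meas.indicator hA).add (hw₂meas.indicator hA.compl)) ?_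
    intro Y hY
    filter_upwards [hsplitc Y hY, hw₁lb Y hY, hw₂lb Y hY] with ω h h1 h2
    show A.indicator w₁ ω + Aᶜ.indicator w₂ ω ≤ _
    rw [h]
    show A.indicator w₁ ω + Aᶜ.indicator w₂ ω ≤ _ + _
    by_cases hω : ω ∈ A
    · have h' : ω ∉ Aᶜ := by simp [hω]
      rw [Set.indicator_of_mem hω, Set.indicator_of_mem hω,
        Set.indicator_of_notMem h', Set.indicator_of_notMem h', add_zero, add_zero]
      exact h1
    · have h' : ω ∈ Aᶜ := by simp [hω]
      rw [Set.indicator_of_notMem hω, Set.indicator_of_notMem hω,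
        Set.indicator_of_mem h', Set.indicator_of_mem h', zero_add, zero_add]
      exact h2
  have hge : (fun ω => A.indicator v₁ ω + Aᶜ.indicator v₂ ω) ≤ᵐ[P] vc := by
    filter_upwards [hlowvc, hv₁w₁, hv₂w₂] with ω h0 h1 h2
    show A.indicator v₁ ω + Aᶜ.indicator v₂ ω ≤ vc ω
    refine le_trans ?_ h0
    by_cases hω : ω ∈ A
    · have h' : ω ∉ Aᶜ := by simp [hω]
      rw [Set.indicator_of_mem hω, Set.indicator_of_mem hω,
        Set.indicator_of_notMem h', Set.indicator_of_notMem h', add_zero, add_zero]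
      exact h1
    · have h' : ω ∈ Aᶜ := by simp [hω]
      rw [Set.indicator_of_notMem hω, Set.indicator_of_notMem hω,
        Set.indicator_of_mem h', Set.indicator_of_mem h', zero_add, zero_add]
      exact h2
  -- upper bound on A : vc ≤ v₁
  have hup1 : ∀ᵐ ω ∂P, A.indicator wc ω + Aᶜ.indicator w₁ ω ≤ v₁ ω := by
    refine hv₁glb (fun ω => A.indicator wc ω + Aᶜ.indicator w₁ ω)
      ((hwcmeas.indicator hA).add (hw₁meas.indicator hA.compl)) ?_
    intro Y hY
    have hYmixmem : (fun ω => A.indicator (fun _ => (1:ℝ)) ω * Y ω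
        + (1 - A.indicator (fun _ => (1:ℝ)) ω) * Y₀ ω) ∈ 𝒴 := by
      refine h𝒴conv Y hY Y₀ hY₀ _ (measurable_const.indicator hA) ?_
      intro ω
      by_cases h : ω ∈ A <;>
        simp [Set.indicator_of_mem, Set.indicator_of_notMem, h]
    have hpt2 : (fun ω' => V (Z ω' * (A.indicator η₁ ω' + Aᶜ.indicator η₂ ω') *
          (A.indicator (fun _ => (1:ℝ)) ω' * Y ω'
            + (1 - A.indicator (fun _ => (1:ℝ)) ω') * Y₀ ω')))
        = fun ω => A.indicator (fun ω' => V (Z ω' * η₁ ω' * Y ω')) ω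
          + Aᶜ.indicator (fun ω' => V (Z ω' * η₂ ω' * Y₀ ω')) ω := by
      funext ω
      by_cases h : ω ∈ A
      · have h' : ω ∉ Aᶜ := by simp [h]
        rw [Set.indicator_of_mem h, Set.indicator_of_mem h, Set.indicator_of_mem h,
          Set.indicator_of_notMem h', Set.indicator_of_notMem h']
        norm_num
      · have h' : ω ∈ Aᶜ := by simp [h]
        rw [Set.indicator_of_notMem h, Set.indicator_of_notMem h,
          Set.indicator_of_notMem h, Set.indicator_of_mem h', Set.indicator_of_mem h']
        norm_num
    have hEc : wc ≤ᵐ[P] condExp hτ.measurableSpaceOld P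
        (fun ω' => V (Z ω' * (A.indicator η₁ ω' + Aᶜ.indicator η₂ ω') *
          (A.indicator (fun _ => (1:ℝ)) ω' * Y ω'
            + (1 - A.indicator (fun _ => (1:ℝ)) ω') * Y₀ ω'))) :=
      hwclb _ hYmixmem
    rw [hpt2] at hEc
    have hsp := Stmt17Aux.condExp_split hle P hA (hint₁ Y hY) (hint₂ Y₀ hY₀)
    filter_upwards [hEc, hsp, hw₁lb Y hY] with ω h1 h2 h3
    show A.indicator wc ω + Aᶜ.indicator w₁ ω ≤ _
    by_cases hω : ω ∈ A
    · have h' : ω ∉ Aᶜ := by simp [hω]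
      rw [Set.indicator_of_mem hω, Set.indicator_of_notMem h', add_zero]
      have h4 : wc ω ≤ A.indicator
          (condExp hτ.measurableSpaceOld P (fun ω' => V (Z ω' * η₁ ω' * Y ω'))) ω
          + Aᶜ.indicator
          (condExp hτ.measurableSpaceOld P (fun ω' => V (Z ω' * η₂ ω' * Y₀ ω'))) ω :=
        h1.trans (le_of_eq h2)
      rwa [Set.indicator_of_mem hω, Set.indicator_of_notMem h', add_zero] at h4
    · have h' : ω ∈ Aᶜ := by simp [hω]
      rw [Set.indicator_of_notMem hω, Set.indicator_of_mem h', zero_add]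
      exact h3
  -- upper bound on Aᶜ : vc ≤ v₂
  have hup2 : ∀ᵐ ω ∂P, Aᶜ.indicator wc ω + A.indicator w₂ ω ≤ v₂ ω := by
    refine hv₂glb (fun ω => Aᶜ.indicator wc ω + A.indicator w₂ ω)
      ((hwcmeas.indicator hA.compl).add (hw₂meas.indicator hA)) ?_
    intro Y hY
    have hYmixmem : (fun ω => Aᶜ.indicator (fun _ => (1:ℝ)) ω * Y ω
        + (1 - Aᶜ.indicator (fun _ => (1:ℝ)) ω) * Y₀ ω) ∈ 𝒴 := by
      refine h𝒴conv Y hY Y₀ hY₀ _ (measurable_const.indicator hA.compl) ?_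
      intro ω
      by_cases h : ω ∈ Aᶜ <;>
        simp [Set.indicator_of_mem, Set.indicator_of_notMem, h]
    have hpt2 : (fun ω' => V (Z ω' * (A.indicator η₁ ω' + Aᶜ.indicator η₂ ω') *
          (Aᶜ.indicator (fun _ => (1:ℝ)) ω' * Y ω'
            + (1 - Aᶜ.indicator (fun _ => (1:ℝ)) ω') * Y₀ ω')))
        = fun ω => A.indicator (fun ω' => V (Z ω' * η₁ ω' * Y₀ ω')) ω
          + Aᶜ.indicator (fun ω' => V (Z ω' * η₂ ω' * Y ω')) ω := by
      funext ω
      by_cases h : ω ∈ A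
      · have h' : ω ∉ Aᶜ := by simp [h]
        rw [Set.indicator_of_mem h, Set.indicator_of_mem h,
          Set.indicator_of_notMem h', Set.indicator_of_notMem h',
          Set.indicator_of_notMem h']
        norm_num
      · have h' : ω ∈ Aᶜ := by simp [h]
        rw [Set.indicator_of_notMem h, Set.indicator_of_notMem h,
          Set.indicator_of_mem h', Set.indicator_of_mem h', Set.indicator_of_mem h']
        norm_num
    have hEc : wc ≤ᵐ[P] condExp hτ.measurableSpaceOld P
        (fun ω' => V (Z ω' * (A.indicator η₁ ω' + Aᶜ.indicator η₂ ω') *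
          (Aᶜ.indicator (fun _ => (1:ℝ)) ω' * Y ω'
            + (1 - Aᶜ.indicator (fun _ => (1:ℝ)) ω') * Y₀ ω'))) :=
      hwclb _ hYmixmem
    rw [hpt2] at hEc
    have hsp := Stmt17Aux.condExp_split hle P hA (hint₁ Y₀ hY₀) (hint₂ Y hY)
    filter_upwards [hEc, hsp, hw₂lb Y hY] with ω h1 h2 h3
    show Aᶜ.indicator wc ω + A.indicator w₂ ω ≤ _
    by_cases hω : ω ∈ A
    · have h' : ω ∉ Aᶜ := by simp [hω]
      rw [Set.indicator_of_notMem h', Set.indicator_of_mem hω, zero_add]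
      exact h3
    · have h' : ω ∈ Aᶜ := by simp [hω]
      rw [Set.indicator_of_mem h', Set.indicator_of_notMem hω, add_zero]
      have h4 : wc ω ≤ A.indicator
          (condExp hτ.measurableSpaceOld P (fun ω' => V (Z ω' * η₁ ω' * Y₀ ω'))) ω
          + Aᶜ.indicator
          (condExp hτ.measurableSpaceOld P (fun ω' => V (Z ω' * η₂ ω' * Y ω'))) ω :=
        h1.trans (le_of_eq h2)
      rwa [Set.indicator_of_notMem hω, Set.indicator_of_mem h', zero_add] at h4
  -- conclusion
  have hle' : vc ≤ᵐ[P] fun ω => A.indicator v₁ ω + Aᶜ.indicator v₂ ω := by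
    filter_upwards [hvcwc, hup1, hup2] with ω h0 h1 h2
    show vc ω ≤ A.indicator v₁ ω + Aᶜ.indicator v₂ ω
    by_cases hω : ω ∈ A
    · have h' : ω ∉ Aᶜ := by simp [hω]
      rw [Set.indicator_of_mem hω, Set.indicator_of_notMem h', add_zero]
      rw [Set.indicator_of_mem hω, Set.indicator_of_notMem h', add_zero] at h1
      exact h0.trans h1
    · have h' : ω ∈ Aᶜ := by simp [hω]
      rw [Set.indicator_of_notMem hω, Set.indicator_of_mem h', zero_add]
      rw [Set.indicator_of_mem h', Set.indicator_of_notMem hω, add_zero] at h2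
      exact h0.trans h2
  exact hle'.antisymm hge
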